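/- Let a < b be real numbers and let f : ℝ → ℝ be continuously differentiable on [a,b]. Then f is monotone decreasing on [a,b] if and only if D^α_{*a} f(t) ≤ 0 for all t ∈ [a,b] and all α ∈ (0,1). -/

import Mathlib

open Set MeasureTheory intervalIntegral in
private lemma caputo_aux_deriv_nonpos_of_antitoneOn {f : ℝ → ℝ} {a b x : ℝ}
    (hd : DifferentiableAt ℝ f x) (hA : AntitoneOn f (Set.Icc a b))
    (hx : x ∈ Set.Ioo a b) : deriv f x ≤ 0 := by
  have h := hd.hasDerivAt
  rw [hasDerivAt_iff_tendsto_slope] at h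
  have h' : Filter.Tendsto (slope f x) (nhdsWithin x (Set.Ioi x)) (nhds (deriv f x)) :=
    h.mono_left (nhdsWithin_mono x (by intro y hy; exact ne_of_gt hy))
  refine le_of_tendsto h' ?_
  filter_upwards [Ioo_mem_nhdsGT_of_mem (Set.mem_Ico.2 ⟨le_refl x, hx.2⟩)] with y hy
  rw [slope_def_field]
  apply div_nonpos_of_nonpos_of_nonneg
  · have := hA (Set.mem_Icc.2 ⟨hx.1.le, hx.2.le⟩)
      (Set.mem_Icc.2 ⟨(hx.1.trans hy.1).le, hy.2.le⟩) hy.1.le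
    linarith
  · linarith [hy.1]

/-- The Caputo fractional derivative of order `α` with starting point `a`:
`D^α_{*a} f(t) = (1/Γ(1-α)) ∫_a^t (t-s)^(-α) f'(s) ds`. -/
noncomputable def caputoDeriv (a α : ℝ) (f : ℝ → ℝ) (t : ℝ) : ℝ :=
  (Real.Gamma (1 - α))⁻¹ * ∫ s in a..t, (t - s) ^ (-α) * deriv f s

open Set MeasureTheory intervalIntegral in
set_option maxHeartbeats 1000000 in
theorem antitoneOn_iff_caputo_nonpos (a b : ℝ) (hab : a < b) (f : ℝ → ℝ)
    (hf : ContDiffOn ℝ 1 f (Set.Icc a b)) :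
    AntitoneOn f (Set.Icc a b) ↔
      ∀ t ∈ Set.Icc a b, ∀ α ∈ Set.Ioo (0 : ℝ) 1, caputoDeriv a α f t ≤ 0 := by
  simp only [caputoDeriv]
  constructor
  · intro hA t ht α hα
    have hΓ : 0 < Real.Gamma (1 - α) := Real.Gamma_pos_of_pos (by linarith [hα.2])
    apply mul_nonpos_of_nonneg_of_nonpos (inv_nonneg.2 hΓ.le)
    rw [intervalIntegral.integral_of_le ht.1]
    apply MeasureTheory.setIntegral_nonpos measurableSet_Ioc
    intro s hs
    rcases eq_or_lt_of_le hs.2 with h | h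
    · subst h
      rw [sub_self, Real.zero_rpow (by linarith [hα.1] : -α ≠ 0), zero_mul]
    · apply mul_nonpos_of_nonneg_of_nonpos
      · exact Real.rpow_nonneg (by linarith) _
      · refine caputo_aux_deriv_nonpos_of_antitoneOn ?_ hA ⟨hs.1, lt_of_lt_of_le h ht.2⟩
        exact (hf.differentiableOn one_ne_zero).differentiableAt
          (Icc_mem_nhds hs.1 (lt_of_lt_of_le h ht.2))
  · intro H
    have hgc : ContinuousOn (derivWithin f (Set.Icc a b)) (Set.Icc a b) :=
      hf.continuousOn_derivWithin (uniqueDiffOn_Icc hab) le_rfl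
    have hgd : ∀ x ∈ Set.Ioo a b, deriv f x = derivWithin f (Set.Icc a b) x := fun x hx =>
      (derivWithin_of_mem_nhds (Icc_mem_nhds hx.1 hx.2)).symm
    obtain ⟨M, hM⟩ := isCompact_Icc.exists_bound_of_continuousOn hgc
    have hM0 : 0 ≤ M := le_trans (norm_nonneg _) (hM a ⟨le_refl a, hab.le⟩)
    have hMd : ∀ s ∈ Set.Ioo a b, |deriv f s| ≤ M := by
      intro s hs
      rw [hgd s hs]
      exact hM s (Set.mem_Icc.2 ⟨hs.1.le, hs.2.le⟩)
    have hdc : ContinuousOn (deriv f) (Set.Ioo a b) :=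
      (hgc.mono Set.Ioo_subset_Icc_self).congr hgd
    apply antitoneOn_of_deriv_nonpos (convex_Icc a b) hf.continuousOn
    · rw [interior_Icc]
      intro x hx
      exact ((hf.differentiableOn one_ne_zero).differentiableAt
        (Icc_mem_nhds hx.1 hx.2)).differentiableWithinAt
    rw [interior_Icc]
    intro c hc
    by_contra hpos
    push_neg at hpos
    set m : ℝ := deriv f c / 2 with hm_def
    have hm : 0 < m := by positivity
    -- find η
    have hcont : ContinuousAt (deriv f) c := hdc.continuousAt (isOpen_Ioo.mem_nhds hc)
    have hev : ∀ᶠ s in nhds c, m < deriv f s ∧ s ∈ Set.Ioo a b := by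
      filter_upwards [hcont.eventually (eventually_gt_nhds (by linarith : m < deriv f c)),
        isOpen_Ioo.mem_nhds hc] with s h1 h2
      exact ⟨h1, h2⟩
    obtain ⟨ε, hε, hball⟩ := Metric.eventually_nhds_iff.1 hev
    set η : ℝ := ε / 2 with hη_def
    have hη : 0 < η := by positivity
    set u : ℝ := c - η with hu_def
    set t : ℝ := c + η with ht_def
    have key : ∀ s ∈ Set.Icc u t, m ≤ deriv f s ∧ s ∈ Set.Ioo a b := by
      intro s hs
      have : dist s c < ε := by
        rw [Real.dist_eq, abs_lt]
        constructor <;> [linarith [hs.1]; linarith [hs.2]]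
      exact ⟨(hball this).1.le, (hball this).2⟩
    have hau : a < u := (key u ⟨le_refl u, by simp [hu_def, ht_def]; linarith⟩).2.1
    have htb : t < b := (key t ⟨by simp [hu_def, ht_def]; linarith, le_refl t⟩).2.2
    have hut : u < t := by simp [hu_def, ht_def]; linarith
    have htu : t - u = 2 * η := by simp [hu_def, ht_def]; ring
    -- constants
    set K₀ : ℝ := max 1 (2*η)⁻¹ with hK₀_def
    have hK₀1 : (1:ℝ) ≤ K₀ := le_max_left _ _
    set C : ℝ := K₀ * M * (b - a) with hC_def
    have hC0 : 0 ≤ C := by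
      have : (0:ℝ) ≤ b - a := by linarith
      positivity
    set ε' : ℝ := min (1/2) (m * min 1 (2*η) / (2*(C+1))) with hε'_def
    have hmin : 0 < min 1 (2*η) := lt_min one_pos (by linarith)
    have hε' : 0 < ε' := lt_min (by norm_num) (by positivity)
    have hε'le : ε' ≤ m * min 1 (2*η) / (2*(C+1)) := min_le_right _ _
    set α : ℝ := 1 - ε' with hα_def
    have hα0 : 0 < α := by
      have : ε' ≤ 1/2 := min_le_left _ _
      simp only [hα_def]; linarith
    have hα1 : α < 1 := by simp only [hα_def]; linarith
    have h1α : 1 - α = ε' := by simp [hα_def]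
    -- integrability
    have hK : IntervalIntegrable (fun s => (t - s) ^ (-α)) volume a t := by
      have h := (intervalIntegrable_rpow' (by linarith : (-1:ℝ) < -α)
          (a := t - a) (b := t - t)).comp_sub_left t
      simpa using h
    have hK2 : IntervalIntegrable (fun s => (t - s) ^ (-α)) volume u t :=
      hK.mono_set (Set.uIcc_subset_uIcc (by
          rw [Set.mem_uIcc]; left; exact ⟨hau.le, hut.le⟩)
        (by rw [Set.mem_uIcc]; left; exact ⟨by linarith, le_refl t⟩))
    have hcont_ut : ContinuousOn (deriv f) (Set.uIcc u t) := by
      rw [Set.uIcc_of_le hut.le]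
      exact hdc.mono (fun s hs => (key s hs).2)
    have Int2 : IntervalIntegrable (fun s => (t - s) ^ (-α) * deriv f s) volume u t :=
      hK2.mul_continuousOn hcont_ut
    -- bound for integrand on Ioc a u
    have hbound : ∀ s ∈ Set.Ioc a u, ‖(t - s) ^ (-α) * deriv f s‖ ≤ K₀ * M := by
      intro s hs
      have hs2 : s ∈ Set.Ioo a b := ⟨hs.1, by linarith [hs.2]⟩
      have h2η : 2 * η ≤ t - s := by simp only [ht_def]; linarith [hs.2]
      have hKs : (t - s) ^ (-α) ≤ K₀ := by
        calc (t - s) ^ (-α) ≤ (2*η) ^ (-α) :=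
              Real.rpow_le_rpow_of_nonpos (by linarith) h2η (by linarith)
        _ ≤ K₀ := by
            rcases le_total 1 (2*η) with h | h
            · exact le_trans (Real.rpow_le_one_of_one_le_of_nonpos h (by linarith))
                (le_max_left _ _)
            · calc (2*η) ^ (-α) ≤ (2*η) ^ (-1 : ℝ) :=
                  Real.rpow_le_rpow_of_exponent_ge (by linarith) h (by linarith)
              _ = (2*η)⁻¹ := Real.rpow_neg_one _
              _ ≤ _ := le_max_right _ _
      rw [norm_mul, Real.norm_eq_abs, Real.norm_eq_abs,
        abs_of_nonneg (Real.rpow_nonneg (by linarith) _)]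
      exact mul_le_mul hKs (hMd s hs2) (abs_nonneg _) (by linarith)
    -- integrability on [a,u]
    have Int1 : IntervalIntegrable (fun s => (t - s) ^ (-α) * deriv f s) volume a u := by
      rw [intervalIntegrable_iff, Set.uIoc_of_le hau.le]
      apply Integrable.mono' (g := fun _ => K₀ * M)
        (integrableOn_const measure_Ioc_lt_top.ne)
      · exact (((measurable_id.const_sub t).pow_const _).mul (measurable_deriv f)).aestronglyMeasurable
      · filter_upwards [ae_restrict_mem measurableSet_Ioc] with s hs
        exact hbound s hs
    -- splitting
    have hsplit : (∫ s in a..t, (t - s) ^ (-α) * deriv f s) =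
        (∫ s in a..u, (t - s) ^ (-α) * deriv f s) + ∫ s in u..t, (t - s) ^ (-α) * deriv f s :=
      (integral_add_adjacent_intervals Int1 Int2).symm
    -- bound on [a,u] piece
    have boundA : |∫ s in a..u, (t - s) ^ (-α) * deriv f s| ≤ C := by
      have h := intervalIntegral.norm_integral_le_of_norm_le_const (C := K₀ * M)
        (f := fun s => (t - s) ^ (-α) * deriv f s) (a := a) (b := u) ?_
      · rw [Real.norm_eq_abs] at h
        refine h.trans ?_
        rw [abs_of_nonneg (by linarith : (0:ℝ) ≤ u - a), hC_def]
        have : u - a ≤ b - a := by linarith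
        have hKM : 0 ≤ K₀ * M := by positivity
        calc K₀ * M * (u - a) ≤ K₀ * M * (b - a) := by nlinarith
        _ = C := rfl
      · intro x hx
        rw [Set.uIoc_of_le hau.le] at hx
        exact hbound x hx
    -- lower bound on [u,t] piece
    have kernel_int : (∫ s in u..t, (t - s) ^ (-α)) = (2*η) ^ (1 - α) / (1 - α) := by
      have h1 : (∫ s in u..t, (t - s) ^ (-α)) = ∫ y in (t-t)..(t-u), y ^ (-α) :=
        intervalIntegral.integral_comp_sub_left (fun y => y ^ (-α)) t
      rw [h1, sub_self, htu, integral_rpow (Or.inl (by linarith)),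
        Real.zero_rpow (by linarith : -α + 1 ≠ 0)]
      ring_nf
    have boundB : m * min 1 (2*η) / (1 - α) ≤ ∫ s in u..t, (t - s) ^ (-α) * deriv f s := by
      have step1 : (∫ s in u..t, (t - s) ^ (-α) * m) ≤
          ∫ s in u..t, (t - s) ^ (-α) * deriv f s := by
        apply intervalIntegral.integral_mono_on hut.le (hK2.mul_const m) Int2
        intro s hs
        exact mul_le_mul_of_nonneg_left (key s hs).1 (Real.rpow_nonneg (by linarith [hs.2]) _)
      have step2 : (∫ s in u..t, (t - s) ^ (-α) * m) = ((2*η) ^ (1 - α) / (1 - α)) * m := by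
        rw [intervalIntegral.integral_mul_const, kernel_int]
      have step3 : min 1 (2*η) ≤ (2*η) ^ (1 - α) := by
        rcases le_total 1 (2*η) with h | h
        · exact le_trans (min_le_left _ _) (Real.one_le_rpow h (by linarith))
        · refine le_trans (min_le_right _ _) ?_
          calc (2*η) = (2*η) ^ (1:ℝ) := (Real.rpow_one _).symm
          _ ≤ (2*η) ^ (1-α) := Real.rpow_le_rpow_of_exponent_ge (by linarith) h (by linarith)
      have hden : 0 < 1 - α := h1α ▸ hε'
      refine le_trans ?_ step1
      rw [step2, div_mul_eq_mul_div ((2*η) ^ (1-α)) (1-α) m]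
      apply (div_le_div_iff_of_pos_right hden).2
      nlinarith [step3, hm.le]
    -- conclusion
    have hI : 0 < ∫ s in a..t, (t - s) ^ (-α) * deriv f s := by
      have h2 : ε' * (2*(C+1)) ≤ m * min 1 (2*η) := (le_div_iff₀ (by positivity)).1 hε'le
      have hq : 2*(C+1) ≤ m * min 1 (2*η) / ε' := (le_div_iff₀ hε').2 (by linarith)
      have hB := boundB
      rw [h1α] at hB
      have habs := (abs_le.1 boundA).1
      rw [hsplit]
      linarith
    have hΓ : 0 < Real.Gamma (1 - α) := Real.Gamma_pos_of_pos (h1α ▸ hε')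
    have := H t ⟨by linarith, htb.le⟩ α ⟨hα0, hα1⟩
    nlinarith [mul_pos (inv_pos.2 hΓ) hI]
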